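/- Let (K,|·|) be a normed field, u ∈ Kⁿ with n ≥ 1, and 1 ≤ p ≤ ∞. Then |∏_{i=1}^n (1 + u_i)| ≤ (1 + ‖u‖_p / n^{1/p})^n and |∏_{i=1}^n (1 + u_i) − 1| ≤ (1 + ‖u‖_p / n^{1/p})^n − 1 (with n^{1/∞} = 1 when p = ∞). -/

import Mathlib

open Finset Filter Topology
open scoped ENNReal

noncomputable def pnorm {n : ℕ} (p : ℝ≥0∞) (v : Fin n → ℝ) : ℝ :=
  if p = ⊤ then ⨆ i, |v i| else (∑ i, |v i| ^ p.toReal) ^ (1 / p.toReal)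

noncomputable def epow (a : ℝ) (p : ℝ≥0∞) : ℝ :=
  if p = ⊤ then 1 else a ^ (1 / p.toReal)

noncomputable def dsep {K : Type*} [NormedField K] {n : ℕ} (x : Fin n → K) (i : Fin n) : ℝ :=
  sInf {r : ℝ | ∃ j, j ≠ i ∧ r = ‖x i - x j‖}

noncomputable def Wcorr {K : Type*} [NormedField K] {n : ℕ} (f : Polynomial K)
    (x : Fin n → K) (i : Fin n) : K :=
  Polynomial.eval (x i) f / (f.leadingCoeff * ∏ j ∈ Finset.univ.erase i, (x i - x j))

def IsRootVector {K : Type*} [NormedField K] {n : ℕ} (f : Polynomial K) (ξ : Fin n → K) : Prop :=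
  ∀ z : K, Polynomial.eval z f = f.leadingCoeff * ∏ i, (z - ξ i)


private lemma prod_aux_A {K : Type*} [NormedField K] {ι : Type*} (s : Finset ι) (u : ι → K) :
    ‖(∏ i ∈ s, (1 + u i)) - 1‖ ≤ (∏ i ∈ s, (1 + ‖u i‖)) - 1 := by
  classical
  induction s using Finset.induction with
  | empty => simp
  | insert _ _ ha ih =>
    rename_i a s
    have hQ1 : (1:ℝ) ≤ ∏ i ∈ s, (1 + ‖u i‖) := by
      have := Finset.prod_le_prod (s := s) (f := fun _ => (1:ℝ)) (g := fun i => 1 + ‖u i‖)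
        (fun i _ => zero_le_one) (fun i _ => by simp [norm_nonneg])
      simpa using this
    rw [Finset.prod_insert ha, Finset.prod_insert ha]
    have key : (1 + u a) * ∏ i ∈ s, (1 + u i) - 1
        = (1 + u a) * ((∏ i ∈ s, (1 + u i)) - 1) + u a := by ring
    rw [key]
    calc ‖(1 + u a) * ((∏ i ∈ s, (1 + u i)) - 1) + u a‖
        ≤ ‖1 + u a‖ * ‖(∏ i ∈ s, (1 + u i)) - 1‖ + ‖u a‖ := by
          exact (norm_add_le _ _).trans (by rw [norm_mul])
      _ ≤ (1 + ‖u a‖) * ((∏ i ∈ s, (1 + ‖u i‖)) - 1) + ‖u a‖ := by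
          gcongr
          exact (norm_add_le _ _).trans (by simp)
      _ = (1 + ‖u a‖) * (∏ i ∈ s, (1 + ‖u i‖)) - 1 := by ring

private lemma prod_aux_B {n : ℕ} (hn : 1 ≤ n) (v : Fin n → ℝ) (hv : ∀ i, 0 ≤ v i) :
    ∏ i, (1 + v i) ≤ (1 + (∑ i, v i) / n) ^ n := by
  have hn0 : (0:ℝ) < n := by positivity
  have hone : ∑ _i : Fin n, 1 / (n:ℝ) = 1 := by
    simp [Finset.card_univ]
    field_simp
  have key := Real.geom_mean_le_arith_mean_weighted Finset.univ
    (fun _ : Fin n => 1 / (n:ℝ)) (fun i => 1 + v i)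
    (fun i _ => by positivity) hone (fun i _ => by show (0:ℝ) ≤ 1 + v i; linarith [hv i])
  have hsum : ∑ i : Fin n, (1/(n:ℝ)) * (1 + v i) = 1 + (∑ i, v i)/n := by
    rw [← Finset.mul_sum, Finset.sum_add_distrib]
    field_simp
    simp
  rw [hsum] at key
  have hrw : ∏ i, (1 + v i) = (∏ i, (1 + v i) ^ (1/(n:ℝ))) ^ n := by
    rw [← Finset.prod_pow]
    refine Finset.prod_congr rfl fun i _ => ?_
    rw [← Real.rpow_natCast ((1 + v i) ^ (1/(n:ℝ))) n,
      ← Real.rpow_mul (by linarith [hv i])]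
    rw [one_div, inv_mul_cancel₀ hn0.ne', Real.rpow_one]
  rw [hrw]
  exact pow_le_pow_left₀ (Finset.prod_nonneg fun i _ => by
    have := hv i; positivity) key n

private lemma prod_aux_Ctop {n : ℕ} (hn : 1 ≤ n) (v : Fin n → ℝ) :
    (∑ i, v i) / n ≤ ⨆ i, |v i| := by
  have : Nonempty (Fin n) := Fin.pos_iff_nonempty.mp hn
  have hn0 : (0:ℝ) < n := by positivity
  rw [div_le_iff₀ hn0]
  calc ∑ i, v i ≤ ∑ _i : Fin n, ⨆ j, |v j| := by
        refine Finset.sum_le_sum fun i _ => ?_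
        exact le_trans (le_abs_self _) (le_ciSup (Finite.bddAbove_range fun j => |v j|) i)
    _ = (⨆ j, |v j|) * n := by simp [Finset.card_univ]; ring

private lemma prod_aux_Cfin {n : ℕ} (hn : 1 ≤ n) {p : ℝ} (hp : 1 ≤ p) (v : Fin n → ℝ)
    (hv : ∀ i, 0 ≤ v i) :
    (∑ i, v i) / n ≤ (∑ i, |v i| ^ p) ^ (1/p) / (n:ℝ) ^ (1/p) := by
  have hn0 : (0:ℝ) < n := by positivity
  have key := Real.inner_le_weight_mul_Lp_of_nonneg Finset.univ hp
    (fun _ : Fin n => (1:ℝ)) v (fun _ => zero_le_one) hv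
  simp only [one_mul] at key
  have hcard : ∑ _i : Fin n, (1:ℝ) = n := by simp
  rw [hcard] at key
  have habs : ∀ i, |v i| = v i := fun i => abs_of_nonneg (hv i)
  rw [div_le_div_iff₀ hn0 (by positivity)]
  calc (∑ i, v i) * (n:ℝ) ^ (1/p)
      ≤ ((n:ℝ) ^ (1 - p⁻¹) * (∑ i, v i ^ p) ^ p⁻¹) * (n:ℝ) ^ (1/p) := by
        gcongr
    _ = (∑ i, |v i| ^ p) ^ (1/p) * n := by
        simp only [habs, one_div]
        rw [mul_right_comm, ← Real.rpow_add hn0, sub_add_cancel, Real.rpow_one]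
        ring

/-- For `u ∈ Kⁿ` (`n ≥ 1`) and `1 ≤ p ≤ ∞`:
`|∏ (1 + uᵢ)| ≤ (1 + ‖u‖_p / n^{1/p})^n` and
`|∏ (1 + uᵢ) − 1| ≤ (1 + ‖u‖_p / n^{1/p})^n − 1`. -/
theorem prod_one_add_bound {K : Type*} [NormedField K] {n : ℕ} (hn : 1 ≤ n)
    (u : Fin n → K) (p : ℝ≥0∞) (hp : 1 ≤ p) :
    ‖∏ i, (1 + u i)‖ ≤ (1 + pnorm p (fun i => ‖u i‖) / epow (n : ℝ) p) ^ n ∧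
    ‖(∏ i, (1 + u i)) - 1‖ ≤ (1 + pnorm p (fun i => ‖u i‖) / epow (n : ℝ) p) ^ n - 1 := by
  classical
  set v : Fin n → ℝ := fun i => ‖u i‖ with hvdef
  have hv0 : ∀ i, 0 ≤ v i := fun i => norm_nonneg _
  have hsum0 : 0 ≤ (∑ i, v i) / n :=
    div_nonneg (Finset.sum_nonneg fun i _ => hv0 i) (Nat.cast_nonneg n)
  have ha : (∑ i, v i) / n ≤ pnorm p v / epow (n : ℝ) p := by
    by_cases hptop : p = ⊤
    · simpa [pnorm, epow, hptop] using prod_aux_Ctop hn v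
    · have hpr : 1 ≤ p.toReal := by
        have := ENNReal.toReal_mono hptop hp
        simpa using this
      simpa [pnorm, epow, hptop] using prod_aux_Cfin hn hpr v hv0
  have hprod : ∏ i, (1 + v i) ≤ (1 + pnorm p v / epow (n : ℝ) p) ^ n := by
    refine (prod_aux_B hn v hv0).trans ?_
    exact pow_le_pow_left₀ (by linarith) (by linarith) n
  have h2 : ‖(∏ i, (1 + u i)) - 1‖ ≤ (1 + pnorm p v / epow (n : ℝ) p) ^ n - 1 := by
    refine (prod_aux_A Finset.univ u).trans ?_
    have : ∏ i, (1 + ‖u i‖) = ∏ i, (1 + v i) := rfl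
    rw [this]
    linarith
  refine ⟨?_, h2⟩
  have h3 : ‖∏ i, (1 + u i)‖ - 1 ≤ ‖(∏ i, (1 + u i)) - 1‖ := by
    have := norm_sub_norm_le (∏ i, (1 + u i)) 1
    simpa using this
  linarith
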